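/- Let H be a finite-dimensional Hopf algebra over a field k with counit ε and a nonzero left integral Λ ∈ H, and let X be a free left H-module. Then the invariants of X coincide with Λ·X, i.e., X^H = {x ∈ X : h·x = ε(h)·x for all h ∈ H} = Λ·X. -/

import Mathlib

universe u

open TensorProduct LinearMap Coalgebra HopfAlgebra

namespace Stmt10Aux


variable {k H : Type u} [Field k] [Ring H] [HopfAlgebra k H]

lemma sum_counit_smul' {a : H} {ι : Type*} (r : Coalgebra.Repr k a ι) :
    ∑ i ∈ r.index, Coalgebra.counit (R := k) (r.left i) • r.right i = a := by
  have := Coalgebra.sum_counit_tmul_eq r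
  apply_fun (TensorProduct.lid k H) at this
  rw [map_sum] at this
  simp only [TensorProduct.lid_tmul] at this
  simpa using this

lemma sum_smul_counit' {a : H} {ι : Type*} (r : Coalgebra.Repr k a ι) :
    ∑ i ∈ r.index, Coalgebra.counit (R := k) (r.right i) • r.left i = a := by
  have := Coalgebra.sum_tmul_counit_eq r
  apply_fun (TensorProduct.rid k H) at this
  rw [map_sum] at this
  simp only [TensorProduct.rid_tmul] at this
  simpa using this

/-- `psi f : H ⊗ H → H`, `x ⊗ y ↦ f x • y`. -/
noncomputable def psi (f : Module.Dual k H) : H ⊗[k] H →ₗ[k] H :=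
  (TensorProduct.lid k H).toLinearMap ∘ₗ LinearMap.rTensor H f

@[simp] lemma psi_tmul (f : Module.Dual k H) (x y : H) :
    psi f (x ⊗ₜ[k] y) = f x • y := by simp [psi]

lemma psi_one_mul (f : Module.Dual k H) (h : H) (t : H ⊗[k] H) :
    psi f (((1:H) ⊗ₜ[k] h) * t) = h * psi f t := by
  induction t using TensorProduct.induction_on with
  | zero => simp
  | tmul x y => simp [Algebra.TensorProduct.tmul_mul_tmul, mul_smul_comm]
  | add t₁ t₂ ih₁ ih₂ => rw [mul_add, map_add, ih₁, ih₂, map_add, mul_add]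

lemma psi_mul_one (f : Module.Dual k H) (a : H) (t : H ⊗[k] H) :
    psi f ((a ⊗ₜ[k] (1:H)) * t) = psi (f ∘ₗ LinearMap.mulLeft k a) t := by
  induction t using TensorProduct.induction_on with
  | zero => simp
  | tmul x y => simp [Algebra.TensorProduct.tmul_mul_tmul]
  | add t₁ t₂ ih₁ ih₂ => rw [mul_add, map_add, ih₁, ih₂, map_add]

/-- `Phi Λ : H* → H`, `f ↦ (f ⊗ id)(Δ Λ)`. -/
noncomputable def Phi (Λ : H) : Module.Dual k H →ₗ[k] H where
  toFun f := psi f (Coalgebra.comul Λ)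
  map_add' f g := by simp [psi, LinearMap.rTensor_add]
  map_smul' c f := by simp [psi, LinearMap.rTensor_smul]

lemma Phi_apply (Λ : H) (f : Module.Dual k H) : Phi Λ f = psi f (Coalgebra.comul Λ) := rfl

lemma counit_antipode (h : H) :
    Coalgebra.counit (R := k) (HopfAlgebra.antipode (R := k) h) =
      Coalgebra.counit (R := k) h := by
  let r := ℛ k h
  have h1 := congrArg (Coalgebra.counit (R := k)) (HopfAlgebra.sum_antipode_mul_eq_algebraMap_counit r)
  rw [map_sum, Bialgebra.counit_algebraMap] at h1
  calc Coalgebra.counit (R := k) (HopfAlgebra.antipode (R := k) h)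
      = Coalgebra.counit (R := k) (HopfAlgebra.antipode (R := k)
          (∑ i ∈ r.index, Coalgebra.counit (R := k) (r.right i) • r.left i)) := by
        rw [sum_smul_counit' r]
    _ = ∑ i ∈ r.index, Coalgebra.counit (R := k)
          (HopfAlgebra.antipode (R := k) (r.left i) * r.right i) := by
        rw [map_sum, map_sum]
        refine Finset.sum_congr rfl fun i _ => ?_
        rw [map_smul, map_smul, Bialgebra.counit_mul, smul_eq_mul, mul_comm]
    _ = Coalgebra.counit (R := k) h := h1

section Integral

variable {Λ : H} (hint : ∀ h : H, h * Λ = Coalgebra.counit (R := k) h • Λ)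

include hint

lemma comul_mul_comul' (h : H) :
    Coalgebra.comul (R := k) h * Coalgebra.comul Λ
      = Coalgebra.counit (R := k) h • Coalgebra.comul (R := k) Λ := by
  rw [← Bialgebra.comul_mul, hint, map_smul]

lemma id1 (h : H) :
    (HopfAlgebra.antipode (R := k) h ⊗ₜ[k] (1:H)) * Coalgebra.comul (R := k) Λ
      = ((1:H) ⊗ₜ[k] h) * Coalgebra.comul (R := k) Λ := by
  set S : H →ₗ[k] H := HopfAlgebra.antipode (R := k) with hS
  set z : H ⊗[k] H := Coalgebra.comul (R := k) Λ with hzdef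
  let r := ℛ k h
  let rl : ∀ i, Coalgebra.Repr k (r.left i) (H × H) := fun i => ℛ k (r.left i)
  let rr : ∀ i, Coalgebra.Repr k (r.right i) (H × H) := fun i => ℛ k (r.right i)
  let nu : H ⊗[k] (H ⊗[k] H) →ₗ[k] H ⊗[k] H :=
    (LinearMap.rTensor H ((LinearMap.mul' k H) ∘ₗ (LinearMap.rTensor H S))) ∘ₗ
      (TensorProduct.assoc k H H H).symm.toLinearMap
  have nu_tmul : ∀ x y w : H, nu (x ⊗ₜ[k] (y ⊗ₜ[k] w)) = (S x * y) ⊗ₜ[k] w := by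
    intro x y w
    simp [nu]
  have key := Coalgebra.sum_tmul_tmul_eq r rl rr
  have keynu : ∑ i ∈ r.index, ∑ j ∈ (rr i).index,
      (S (r.left i) * (rr i).left j) ⊗ₜ[k] (rr i).right j = (1:H) ⊗ₜ[k] h := by
    have h1 := congrArg nu key.symm
    simp only [map_sum, nu_tmul] at h1
    rw [h1]
    calc ∑ i ∈ r.index, ∑ j ∈ (rl i).index,
          (S ((rl i).left j) * (rl i).right j) ⊗ₜ[k] r.right i
        = ∑ i ∈ r.index,
            (∑ j ∈ (rl i).index, S ((rl i).left j) * (rl i).right j) ⊗ₜ[k] r.right i := by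
          refine Finset.sum_congr rfl fun i _ => ?_
          rw [TensorProduct.sum_tmul]
      _ = ∑ i ∈ r.index,
            (Coalgebra.counit (R := k) (r.left i) • (1:H)) ⊗ₜ[k] r.right i := by
          refine Finset.sum_congr rfl fun i _ => ?_
          rw [HopfAlgebra.sum_antipode_mul_eq_smul (rl i)]
      _ = ∑ i ∈ r.index,
            (1:H) ⊗ₜ[k] (Coalgebra.counit (R := k) (r.left i) • r.right i) := by
          refine Finset.sum_congr rfl fun i _ => ?_
          rw [TensorProduct.smul_tmul]
      _ = (1:H) ⊗ₜ[k] h := by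
          rw [← TensorProduct.tmul_sum, sum_counit_smul' r]
  have hSh : S h = ∑ i ∈ r.index, Coalgebra.counit (R := k) (r.right i) • S (r.left i) := by
    conv_lhs => rw [← sum_smul_counit' r]
    rw [map_sum]
    simp only [map_smul]
  calc (S h ⊗ₜ[k] (1:H)) * z
      = ((∑ i ∈ r.index, Coalgebra.counit (R := k) (r.right i) • S (r.left i)) ⊗ₜ[k] (1:H)) * z := by
        rw [hSh]
    _ = ∑ i ∈ r.index,
          Coalgebra.counit (R := k) (r.right i) • ((S (r.left i) ⊗ₜ[k] (1:H)) * z) := by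
        rw [TensorProduct.sum_tmul, Finset.sum_mul]
        refine Finset.sum_congr rfl fun i _ => ?_
        rw [← TensorProduct.smul_tmul', smul_mul_assoc]
    _ = ∑ i ∈ r.index, (S (r.left i) ⊗ₜ[k] (1:H)) * (Coalgebra.comul (R := k) (r.right i) * z) := by
        refine Finset.sum_congr rfl fun i _ => ?_
        rw [comul_mul_comul' hint, mul_smul_comm]
    _ = ∑ i ∈ r.index, ∑ j ∈ (rr i).index,
          ((S (r.left i) * (rr i).left j) ⊗ₜ[k] (rr i).right j) * z := by
        refine Finset.sum_congr rfl fun i _ => ?_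
        rw [← (rr i).eq, Finset.sum_mul, Finset.mul_sum]
        refine Finset.sum_congr rfl fun j _ => ?_
        rw [← mul_assoc, Algebra.TensorProduct.tmul_mul_tmul, one_mul]
    _ = ((1:H) ⊗ₜ[k] h) * z := by
        rw [← keynu, Finset.sum_mul]
        refine Finset.sum_congr rfl fun i _ => ?_
        rw [Finset.sum_mul]

lemma mul_Phi (h : H) (f : Module.Dual k H) :
    h * Phi Λ f = Phi Λ (f ∘ₗ LinearMap.mulLeft k (HopfAlgebra.antipode (R := k) h)) := by
  rw [Phi_apply, Phi_apply, ← psi_one_mul, ← id1 hint h, psi_mul_one]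

omit hint in
lemma counit_Phi (f : Module.Dual k H) :
    Coalgebra.counit (R := k) (Phi Λ f) = f Λ := by
  let r := ℛ k Λ
  rw [Phi_apply, ← r.eq, map_sum, map_sum]
  calc ∑ i ∈ r.index, Coalgebra.counit (R := k) (psi f (r.left i ⊗ₜ[k] r.right i))
      = ∑ i ∈ r.index, f (Coalgebra.counit (R := k) (r.right i) • r.left i) := by
        refine Finset.sum_congr rfl fun i _ => ?_
        simp [mul_comm]
    _ = f Λ := by rw [← map_sum, sum_smul_counit']

omit hint in
lemma Phi_counit : Phi Λ (Coalgebra.counit (R := k)) = Λ := by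
  let r := ℛ k Λ
  rw [Phi_apply, ← r.eq, map_sum]
  calc ∑ i ∈ r.index, psi (Coalgebra.counit (R := k)) (r.left i ⊗ₜ[k] r.right i)
      = ∑ i ∈ r.index, Coalgebra.counit (R := k) (r.left i) • r.right i := by
        refine Finset.sum_congr rfl fun i _ => ?_
        rw [psi_tmul]
    _ = Λ := sum_counit_smul' r

end Integral



lemma expand_tensor {ι : Type*} [Fintype ι] (B : Module.Basis ι k H) (z : H ⊗[k] H) :
    z = ∑ i, B i ⊗ₜ[k] psi (B.coord i) z := by
  induction z using TensorProduct.induction_on with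
  | zero => simp
  | tmul x y =>
    simp only [psi_tmul, Module.Basis.coord_apply]
    conv_lhs => rw [← B.sum_repr x]
    rw [TensorProduct.sum_tmul]
    refine Finset.sum_congr rfl fun i _ => ?_
    rw [TensorProduct.smul_tmul]
  | add z₁ z₂ ih₁ ih₂ =>
    simp only [map_add, TensorProduct.tmul_add]
    rw [Finset.sum_add_distrib, ← ih₁, ← ih₂]

section Fin

variable [FiniteDimensional k H] {Λ : H}
variable (hint : ∀ h : H, h * Λ = Coalgebra.counit (R := k) h • Λ) (hΛ0 : Λ ≠ 0)

include hint hΛ0 in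
set_option synthInstance.maxHeartbeats 1000000 in
set_option maxHeartbeats 1000000 in
lemma Phi_surjective : Function.Surjective (Phi (k := k) Λ) := by
  classical
  let B := Module.Free.chooseBasis k H
  set Rng := LinearMap.range (Phi (k := k) Λ) with hRngdef
  set T : Submodule k (H ⊗[k] H) :=
    Submodule.span k {w | ∃ (x y : H), y ∈ Rng ∧ w = x ⊗ₜ[k] y} with hTdef
  set c : Module.Free.ChooseBasisIndex k H → H := fun i => Phi Λ (B.coord i) with hcdef
  have hcR : ∀ i, c i ∈ Rng := fun i => ⟨B.coord i, rfl⟩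
  have hz : Coalgebra.comul (R := k) Λ = ∑ i, B i ⊗ₜ[k] c i := expand_tensor B _
  have hPhiB : ∀ f : Module.Dual k H, Phi Λ f = ∑ i, f (B i) • c i := by
    intro f
    rw [Phi_apply, hz, map_sum]
    refine Finset.sum_congr rfl fun i _ => ?_
    rw [psi_tmul]
  -- each `comul (c i)` lies in `T`
  have hciT : ∀ i, Coalgebra.comul (R := k) (c i) ∈ T := by
    intro i
    have hkey : (∑ j, B j ⊗ₜ[k] Coalgebra.comul (R := k) (c j))
        = ∑ j, (TensorProduct.assoc k H H H) ((Coalgebra.comul (R := k) (B j)) ⊗ₜ[k] c j) := by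
      have h1 : (LinearMap.lTensor H (Coalgebra.comul (R := k)))
          (Coalgebra.comul (R := k) Λ) = ∑ j, B j ⊗ₜ[k] Coalgebra.comul (R := k) (c j) := by
        rw [hz, map_sum]
        refine Finset.sum_congr rfl fun j _ => ?_
        rw [LinearMap.lTensor_tmul]
      have h2 : (LinearMap.rTensor H (Coalgebra.comul (R := k)))
          (Coalgebra.comul (R := k) Λ)
          = ∑ j, (Coalgebra.comul (R := k) (B j)) ⊗ₜ[k] c j := by
        rw [hz, map_sum]
        refine Finset.sum_congr rfl fun j _ => ?_
        rw [LinearMap.rTensor_tmul]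
      rw [← h1, ← Coalgebra.coassoc_apply, h2, map_sum]
    let chi : H ⊗[k] (H ⊗[k] H) →ₗ[k] H ⊗[k] H :=
      (TensorProduct.lid k (H ⊗[k] H)).toLinearMap ∘ₗ LinearMap.rTensor (H ⊗[k] H) (B.coord i)
    have chi_tmul : ∀ (x : H) (w : H ⊗[k] H), chi (x ⊗ₜ[k] w) = B.coord i x • w := by
      intro x w; simp [chi]
    have hOrtho : chi (∑ j, B j ⊗ₜ[k] Coalgebra.comul (R := k) (c j))
        = Coalgebra.comul (R := k) (c i) := by
      rw [map_sum]
      rw [Finset.sum_eq_single i]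
      · rw [chi_tmul]; simp
      · intro j _ hji
        rw [chi_tmul]
        simp [Finsupp.single_apply, hji]
      · intro hni
        exact absurd (Finset.mem_univ i) hni
    rw [← hOrtho, hkey, map_sum]
    refine Submodule.sum_mem _ fun j _ => ?_
    let rj := ℛ k (B j)
    rw [← rj.eq, TensorProduct.sum_tmul, map_sum, map_sum]
    refine Submodule.sum_mem _ fun t _ => ?_
    rw [TensorProduct.assoc_tmul, chi_tmul]
    exact Submodule.smul_mem _ _
      (Submodule.subset_span ⟨rj.right t, c j, hcR j, rfl⟩)
  have hMemT : ∀ f : Module.Dual k H, Coalgebra.comul (R := k) (Phi Λ f) ∈ T := by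
    intro f
    rw [hPhiB f, map_sum]
    exact Submodule.sum_mem _ fun i _ =>
      (by rw [map_smul]; exact Submodule.smul_mem _ _ (hciT i))
  -- the map θ : x ⊗ y ↦ S x * y sends T into Rng
  let theta : H ⊗[k] H →ₗ[k] H :=
    LinearMap.mul' k H ∘ₗ LinearMap.rTensor H (HopfAlgebra.antipode (R := k))
  have theta_T : ∀ w ∈ T, theta w ∈ Rng := by
    intro w hw
    induction hw using Submodule.span_induction with
    | mem w hw =>
      obtain ⟨x, y, hy, rfl⟩ := hw
      obtain ⟨g, rfl⟩ := hy
      have : theta (x ⊗ₜ[k] Phi Λ g) = HopfAlgebra.antipode (R := k) x * Phi Λ g := by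
        simp [theta]
      rw [this, mul_Phi hint]
      exact ⟨_, rfl⟩
    | zero => simp only [map_zero]; exact Submodule.zero_mem _
    | add u v _ _ hu hv => rw [map_add]; exact Submodule.add_mem _ hu hv
    | smul a u _ hu => rw [map_smul]; exact Submodule.smul_mem _ _ hu
  -- 1 ∈ Rng
  have hone : (1 : H) ∈ Rng := by
    have hex : ∃ f : Module.Dual k H, f Λ ≠ 0 := by
      by_contra hc
      push_neg at hc
      exact hΛ0 ((Module.forall_dual_apply_eq_zero_iff k Λ).mp hc)
    obtain ⟨f, hf⟩ := hex
    set f0 : Module.Dual k H := (f Λ)⁻¹ • f with hf0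
    have hf0Λ : f0 Λ = 1 := by
      simp [hf0, inv_mul_cancel₀ hf]
    have h1 : theta (Coalgebra.comul (R := k) (Phi Λ f0)) = 1 := by
      have := HopfAlgebra.mul_antipode_rTensor_comul_apply (R := k) (Phi Λ f0)
      have h2 : theta (Coalgebra.comul (R := k) (Phi Λ f0))
          = algebraMap k H (Coalgebra.counit (R := k) (Phi Λ f0)) := this
      rw [h2, counit_Phi, hf0Λ, map_one]
    rw [← h1]
    exact theta_T _ (hMemT f0)
  intro y
  obtain ⟨g, hg⟩ := hone
  refine ⟨g ∘ₗ LinearMap.mulLeft k (HopfAlgebra.antipode (R := k) y), ?_⟩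
  rw [← mul_Phi hint, hg, mul_one]


include hint hΛ0 in
lemma Phi_injective : Function.Injective (Phi (k := k) Λ) := by
  have hfr : Module.finrank k (Module.Dual k H) = Module.finrank k H :=
    Subspace.dual_finrank_eq
  exact (LinearMap.injective_iff_surjective_of_finrank_eq_finrank hfr).mpr
    (Phi_surjective hint hΛ0)

include hint hΛ0 in
lemma antipode_injective : Function.Injective (HopfAlgebra.antipode (R := k) (A := H)) := by
  rw [← LinearMap.ker_eq_bot, LinearMap.ker_eq_bot']
  intro a ha
  have hmul : ∀ f : Module.Dual k H, a * Phi Λ f = 0 := by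
    intro f
    rw [Phi_apply, ← psi_one_mul, ← id1 hint a, ha, TensorProduct.zero_tmul, zero_mul,
      map_zero]
  obtain ⟨g, hg⟩ := Phi_surjective hint hΛ0 1
  have := hmul g
  rw [hg, mul_one] at this
  exact this

include hint hΛ0 in
lemma antipode_surjective :
    Function.Surjective (HopfAlgebra.antipode (R := k) (A := H)) :=
  LinearMap.injective_iff_surjective.mp (antipode_injective hint hΛ0)

include hint hΛ0 in
/-- Uniqueness of left integrals. -/
lemma integral_unique (t : H) (ht : ∀ h : H, h * t = Coalgebra.counit (R := k) h • t) :
    ∃ d : k, t = d • Λ := by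
  obtain ⟨f, hf⟩ := Phi_surjective hint hΛ0 t
  have hfa : ∀ a : H,
      f ∘ₗ LinearMap.mulLeft k (HopfAlgebra.antipode (R := k) a)
        = Coalgebra.counit (R := k) a • f := by
    intro a
    refine Phi_injective hint hΛ0 ?_
    rw [← mul_Phi hint, hf, ht a, map_smul, hf]
  have hfS : ∀ (a x : H),
      f (HopfAlgebra.antipode (R := k) a * x) = Coalgebra.counit (R := k) a * f x := by
    intro a x
    have := LinearMap.congr_fun (hfa a) x
    simpa using this
  have hfy : ∀ y x : H, f (y * x) = Coalgebra.counit (R := k) y * f x := by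
    intro y x
    obtain ⟨a, rfl⟩ := antipode_surjective hint hΛ0 y
    rw [hfS a x, counit_antipode]
  have hfε : f = f 1 • Coalgebra.counit (R := k) := by
    ext y
    have := hfy y 1
    rw [mul_one] at this
    rw [this]
    simp [mul_comm]
  refine ⟨f 1, ?_⟩
  rw [← hf, hfε, map_smul, Phi_counit]
  simp [Bialgebra.counit_one]

end Fin

end Stmt10Aux

/-- Let H be a finite-dimensional Hopf algebra over a field k with counit ε and
nonzero left integral Λ, and let X be a free left H-module. Then the invariants of X coincide
with Λ·X, i.e. {x : ∀ h, h • x = ε(h) • x} = Λ·X. -/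
theorem stmt10 {k H : Type u} [Field k] [Ring H] [HopfAlgebra k H] [FiniteDimensional k H]
    (Λ : H) (hΛ0 : Λ ≠ 0)
    (hint : ∀ h : H, h * Λ = Coalgebra.counit (R := k) h • Λ)
    (X : Type u) [AddCommGroup X] [Module H X] [Module k X] [IsScalarTower k H X]
    [Module.Free H X] :
    {x : X | ∀ h : H, h • x = Coalgebra.counit (R := k) h • x} =
      Set.range (fun x : X => Λ • x) := by
  classical
  ext x
  simp only [Set.mem_setOf_eq, Set.mem_range]
  constructor
  · intro hx
    let b := Module.Free.chooseBasis H X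
    have hcomp : ∀ i, ∀ h : H,
        h * (b.repr x i) = Coalgebra.counit (R := k) h • (b.repr x i) := by
      intro i h
      have h1 := congrArg (fun y => b.repr y i) (hx h)
      simp only [map_smul, Finsupp.smul_apply, smul_eq_mul] at h1
      have h2 : Coalgebra.counit (R := k) h • x
          = (Coalgebra.counit (R := k) h • (1:H)) • x := by
        rw [smul_assoc, one_smul]
      rw [h2, map_smul, Finsupp.smul_apply, smul_eq_mul, smul_one_mul] at h1
      exact h1
    choose d hd using fun i => Stmt10Aux.integral_unique hint hΛ0 _ (hcomp i)
    have hsupp : ∀ i, d i • (1:H) ≠ 0 → i ∈ (b.repr x).support := by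
      intro i hne
      have hdne : d i ≠ 0 := by
        intro h0; apply hne; rw [h0, zero_smul]
      rw [Finsupp.mem_support_iff, hd i]
      exact smul_ne_zero hdne hΛ0
    set w : Module.Free.ChooseBasisIndex H X →₀ H :=
      Finsupp.onFinset (b.repr x).support (fun i => d i • (1:H)) hsupp with hw
    refine ⟨b.repr.symm w, ?_⟩
    have hΛw : Λ • w = b.repr x := by
      ext i
      rw [Finsupp.smul_apply, smul_eq_mul]
      have : w i = d i • (1:H) := rfl
      rw [this, mul_smul_comm, mul_one, ← hd i]
    calc Λ • b.repr.symm w = b.repr.symm (Λ • w) := by rw [map_smul]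
      _ = b.repr.symm (b.repr x) := by rw [hΛw]
      _ = x := b.repr.symm_apply_apply x
  · rintro ⟨y, rfl⟩ h
    rw [smul_smul, hint h, smul_assoc]
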